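/- If μ is a strongly r-invariant probability measure, m₀ a QMF filter with |m₀|² not constant μ-a.e., μ(m₀ = 0) = 0, and log|m₀|² ∈ L¹(μ), then a := ∫_X log|m₀|² dμ < 0 (strict inequality). -/

import Mathlib

open MeasureTheory

/-- If `μ` is strongly `r`-invariant, `m₀` a QMF filter with `|m₀|²` not constant
`μ`-a.e., `μ(m₀ = 0) = 0`, and `log |m₀|² ∈ L¹(μ)`, then `∫ log |m₀|² dμ < 0`. -/
theorem integral_log_qmf_neg {X : Type*} [MetricSpace X] [CompactSpace X]
    [MeasurableSpace X] [BorelSpace X]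
    (r : X → X) (hr : Function.Surjective r) (hrm : Measurable r)
    (hfin : ∀ x : X, (r ⁻¹' {x}).Finite)
    (μ : Measure X) [IsProbabilityMeasure μ]
    (hinv : ∀ f : X → ℝ, Measurable f → (∃ C, ∀ x, |f x| ≤ C) →
      ∫ x, f x ∂μ =
        ∫ x, ((hfin x).toFinset.card : ℝ)⁻¹ * ∑ y ∈ (hfin x).toFinset, f y ∂μ)
    (m₀ : X → ℂ) (hm : Measurable m₀) (hbd : ∃ C, ∀ x, ‖m₀ x‖ ≤ C)
    (hqmf : ∀ x : X, ((hfin x).toFinset.card : ℝ)⁻¹ *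
      ∑ y ∈ (hfin x).toFinset, ‖m₀ y‖ ^ 2 = 1)
    (hnonconst : ¬ ∃ c : ℝ, (fun x => ‖m₀ x‖ ^ 2) =ᵐ[μ] fun _ => c)
    (hnz : μ {x | m₀ x = 0} = 0)
    (hint : Integrable (fun x => Real.log (‖m₀ x‖ ^ 2)) μ) :
    ∫ x, Real.log (‖m₀ x‖ ^ 2) ∂μ < 0 := by
  obtain ⟨C, hC⟩ := hbd
  set g : X → ℝ := fun x => ‖m₀ x‖ ^ 2 with hg
  have hgmeas : Measurable g := hm.norm.pow_const 2
  have hgbd : ∀ x, |g x| ≤ C ^ 2 := by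
    intro x
    rw [abs_of_nonneg (by positivity)]
    exact pow_le_pow_left₀ (norm_nonneg _) (hC x) 2
  have hgint : Integrable g μ := by
    refine ⟨hgmeas.aestronglyMeasurable, HasFiniteIntegral.of_bounded (C := C ^ 2) ?_⟩
    exact ae_of_all _ fun x => by simpa [Real.norm_eq_abs] using hgbd x
  have hint1 : ∫ x, g x ∂μ = 1 := by
    rw [hinv g hgmeas ⟨C ^ 2, hgbd⟩]
    simp only [hg, hqmf]
    exact (integral_congr_ae (ae_of_all _ hqmf)).trans (by simp)
  have hpos : ∀ᵐ x ∂μ, 0 < g x := by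
    have hne : ∀ᵐ x ∂μ, m₀ x ≠ 0 := by
      rw [ae_iff]; simpa using hnz
    filter_upwards [hne] with x hx
    exact pow_pos (norm_pos_iff.mpr hx) 2
  have hfint : Integrable (fun x => g x - 1 - Real.log (g x)) μ :=
    (hgint.sub (integrable_const 1)).sub hint
  have hfnn : 0 ≤ᵐ[μ] fun x => g x - 1 - Real.log (g x) := by
    filter_upwards [hpos] with x hx
    have := Real.log_le_sub_one_of_pos hx
    simp only [Pi.zero_apply]
    linarith
  have hcalc : ∫ x, (g x - 1 - Real.log (g x)) ∂μ = - ∫ x, Real.log (g x) ∂μ := by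
    have h1 : ∫ x, (g x - 1 - Real.log (g x)) ∂μ
        = (∫ x, (g x - 1) ∂μ) - ∫ x, Real.log (g x) ∂μ :=
      integral_sub (hgint.sub (integrable_const 1)) hint
    have h2 : ∫ x, (g x - 1) ∂μ = (∫ x, g x ∂μ) - ∫ _x, (1 : ℝ) ∂μ :=
      integral_sub hgint (integrable_const 1)
    rw [h1, h2, hint1]
    simp
  by_contra h
  push_neg at h
  have hle : ∫ x, Real.log (g x) ∂μ ≤ 0 := by
    have h0 := integral_nonneg_of_ae hfnn
    rw [hcalc] at h0
    linarith
  have heq : ∫ x, Real.log (g x) ∂μ = 0 := le_antisymm hle h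
  have hzero : ∫ x, (g x - 1 - Real.log (g x)) ∂μ = 0 := by
    rw [hcalc, heq, neg_zero]
  have hae := (integral_eq_zero_iff_of_nonneg_ae hfnn hfint).mp hzero
  apply hnonconst
  refine ⟨1, ?_⟩
  filter_upwards [hae, hpos] with x hx hpx
  simp only [Pi.zero_apply] at hx
  show g x = 1
  by_contra hne
  have := Real.log_lt_sub_one_of_pos hpx hne
  linarith
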